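/- Let α ≥ 2 be an integer and let C be a minimal d_α-D_α cut in A_α with C ≠ {d_α}. Then for every nonempty S ⊆ {1,…,α−1}: d_S ∉ C if and only if x_{T∪{α}} ∈ C for every nonempty T ⊆ {1,…,α−1} with T ∩ S ≠ ∅. -/

import Mathlib

/-- Raw vertex names for the auxiliary graph `A_α`: the special vertex `top = d_α`,
vertices `d S`, and vertices `x S`. -/
inductive AV : Type where
  | top : AV
  | d : Finset ℕ → AV
  | x : Finset ℕ → AV
deriving DecidableEq

/-- The vertices actually present in `A_α`: `d_α`; `d S` for nonempty
`S ⊆ {1, …, α-1}`; and `x S` for `S ⊆ {1, …, α}` with `|S| ≥ 2`. -/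
def AValid (α : ℕ) : AV → Prop
  | AV.top => True
  | AV.d S => S.Nonempty ∧ S ⊆ Finset.Icc 1 (α - 1)
  | AV.x S => 2 ≤ S.card ∧ S ⊆ Finset.Icc 1 α

/-- One-sided adjacency for `A_α`: `d_α x_S` when `α ∈ S`; `d_S x_T` when
`S ∩ T ≠ ∅`; `x_S x_T` when `S ≠ T` and `S ∩ T ≠ ∅`. -/
def AAdj (α : ℕ) : AV → AV → Prop
  | AV.top, AV.x S => α ∈ S
  | AV.d S, AV.x T => (S ∩ T).Nonempty
  | AV.x S, AV.x T => S ≠ T ∧ (S ∩ T).Nonempty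
  | _, _ => False

/-- The auxiliary graph `A_α`, on the valid vertices. -/
def Agraph (α : ℕ) : SimpleGraph {v : AV // AValid α v} where
  Adj a b := AAdj α a.1 b.1 ∨ AAdj α b.1 a.1
  symm := ⟨fun _ _ h => Or.symm h⟩
  loopless := by
    constructor
    rintro ⟨v, hv⟩ h
    rcases v with _ | S | S <;> simp only [AAdj] at h <;> tauto

/-- The vertex `d_α` of `A_α`. -/
def dTop (α : ℕ) : {v : AV // AValid α v} := ⟨AV.top, trivial⟩

/-- The set `D_α = {d_S : S ⊆ {1, …, α-1}, S ≠ ∅}` of vertices of `A_α`. -/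
def Dset (α : ℕ) : Set {v : AV // AValid α v} := {v | ∃ S, v.1 = AV.d S}

/-- `C` is an `A`-`B` cut in `G`: the graph `G - C` (i.e. the subgraph of `G`
induced on `Cᶜ`) contains no path from `A \ C` to `B \ C`. -/
def IsCut {V : Type*} (G : SimpleGraph V) (A B C : Set V) : Prop :=
  ∀ (a b : ↥(Cᶜ : Set V)), (a : V) ∈ A → (b : V) ∈ B →
    ¬ (G.induce (Cᶜ : Set V)).Reachable a b

/-- `C` is a minimal `A`-`B` cut in `G`. -/
def IsMinimalCut {V : Type*} (G : SimpleGraph V) (A B C : Set V) : Prop :=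
  IsCut G A B C ∧ ∀ x ∈ C, ¬ IsCut G A B (C \ {x})

/-- Validity of the vertex `x_{S ∪ {α}}` for nonempty `S ⊆ {1, …, α-1}`. -/
lemma aValid_x_union (α : ℕ) (hα : 2 ≤ α) (S : Finset ℕ)
    (hS : S ⊆ Finset.Icc 1 (α - 1)) (hne : S.Nonempty) :
    AValid α (AV.x (S ∪ {α})) := by
  have hαS : α ∉ S := by
    intro h
    have := (Finset.mem_Icc.1 (hS h)).2
    omega
  constructor
  · have hcard : (S ∪ {α}).card = S.card + 1 := by
      rw [Finset.union_comm, ← Finset.insert_eq, Finset.card_insert_of_notMem hαS]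
    have : 1 ≤ S.card := Finset.one_le_card.2 hne
    omega
  · refine Finset.union_subset (hS.trans (Finset.Icc_subset_Icc le_rfl (Nat.sub_le α 1))) ?_
    simp only [Finset.singleton_subset_iff, Finset.mem_Icc]
    omega

/-- Validity of the vertex `x_R` for `R ⊆ {1, …, α-1}` with `|R| ≥ 2`. -/
lemma aValid_x_low (α : ℕ) (R : Finset ℕ) (hR : R ⊆ Finset.Icc 1 (α - 1))
    (hcard : 2 ≤ R.card) : AValid α (AV.x R) :=
  ⟨hcard, hR.trans (Finset.Icc_subset_Icc le_rfl (Nat.sub_le α 1))⟩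

def ReachIn {V : Type*} (G : SimpleGraph V) (s : Set V) (a b : V) : Prop :=
  ∃ p : G.Walk a b, ∀ v ∈ p.support, v ∈ s

lemma ReachIn.refl {V : Type*} {G : SimpleGraph V} {s : Set V} {a : V} (ha : a ∈ s) :
    ReachIn G s a a :=
  ⟨SimpleGraph.Walk.nil, by simp [ha]⟩

lemma ReachIn.trans {V : Type*} {G : SimpleGraph V} {s : Set V} {a b c : V}
    (h1 : ReachIn G s a b) (h2 : ReachIn G s b c) : ReachIn G s a c := by
  obtain ⟨p, hp⟩ := h1; obtain ⟨q, hq⟩ := h2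
  exact ⟨p.append q, fun v hv => by
    rcases (SimpleGraph.Walk.mem_support_append_iff p q).1 hv with h | h
    exacts [hp v h, hq v h]⟩

lemma ReachIn.cons {V : Type*} {G : SimpleGraph V} {s : Set V} {a b c : V}
    (hab : G.Adj a b) (ha : a ∈ s) (h : ReachIn G s b c) : ReachIn G s a c := by
  obtain ⟨p, hp⟩ := h
  exact ⟨SimpleGraph.Walk.cons hab p, fun v hv => by
    rw [SimpleGraph.Walk.support_cons, List.mem_cons] at hv
    rcases hv with rfl | hv; exacts [ha, hp v hv]⟩

lemma ReachIn.single {V : Type*} {G : SimpleGraph V} {s : Set V} {a b : V}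
    (hab : G.Adj a b) (ha : a ∈ s) (hb : b ∈ s) : ReachIn G s a b :=
  ReachIn.cons hab ha (ReachIn.refl hb)

lemma ReachIn.reverse {V : Type*} {G : SimpleGraph V} {s : Set V} {a b : V}
    (h : ReachIn G s a b) : ReachIn G s b a := by
  obtain ⟨p, hp⟩ := h
  exact ⟨p.reverse, fun v hv => hp v (by
    rwa [SimpleGraph.Walk.support_reverse, List.mem_reverse] at hv)⟩

lemma ReachIn.mem_left {V : Type*} {G : SimpleGraph V} {s : Set V} {a b : V}
    (h : ReachIn G s a b) : a ∈ s := by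
  obtain ⟨p, hp⟩ := h; exact hp a p.start_mem_support

lemma ReachIn.mem_right {V : Type*} {G : SimpleGraph V} {s : Set V} {a b : V}
    (h : ReachIn G s a b) : b ∈ s := by
  obtain ⟨p, hp⟩ := h; exact hp b p.end_mem_support

/-- A walk with support in `s` gives reachability in the induced graph on `s`. -/
lemma reachIn_to_induce {V : Type*} {G : SimpleGraph V} {s : Set V} {a b : V}
    (h : ReachIn G s a b) (ha : a ∈ s) (hb : b ∈ s) :
    (G.induce s).Reachable ⟨a, ha⟩ ⟨b, hb⟩ := by
  obtain ⟨p, hp⟩ := h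
  induction p with
  | nil => exact SimpleGraph.Reachable.refl _
  | @cons u w x hadj q ih =>
    have hw : w ∈ s := hp w (by simp [SimpleGraph.Walk.support_cons])
    have h1 : (G.induce s).Adj ⟨u, ha⟩ ⟨w, hw⟩ := hadj
    exact (h1.reachable).trans (ih hw hb (fun v hv => hp v (by
      rw [SimpleGraph.Walk.support_cons]; exact List.mem_cons_of_mem _ hv)))

lemma induce_to_reachIn {V : Type*} {G : SimpleGraph V} {s : Set V}
    {a b : ↥s} (h : (G.induce s).Reachable a b) : ReachIn G s a.1 b.1 := by
  obtain ⟨p⟩ := h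
  induction p with
  | @nil u => exact ReachIn.refl u.2
  | @cons u w x hadj q ih =>
    exact ReachIn.cons hadj u.2 ih

/-- Splitting off the walk at the first occurrence of `c`. -/
lemma exists_pred_of_walk {V : Type*} [DecidableEq V] {G : SimpleGraph V} {s : Set V}
    {a b c : V} (p : G.Walk a b) (hc : c ∈ p.support) (hca : c ≠ a)
    (hsup : ∀ v ∈ p.support, v ∈ s ∪ {c}) :
    ∃ z, G.Adj z c ∧ ReachIn G s a z := by
  set q0 := p.takeUntil c hc with hq0
  have hcount : q0.support.count c = 1 :=
    SimpleGraph.Walk.count_support_takeUntil_eq_one p hc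
  obtain ⟨w, hadj, r, hr⟩ := SimpleGraph.Walk.exists_eq_cons_of_ne hca q0.reverse
  have hsupp : q0.support.reverse = c :: r.support := by
    rw [← SimpleGraph.Walk.support_reverse, hr, SimpleGraph.Walk.support_cons]
  have hnotc : c ∉ r.support := by
    have : (q0.support.reverse).count c = 1 := by rwa [List.count_reverse]
    rw [hsupp, List.count_cons_self] at this
    exact fun hmem => by
      have := List.count_pos_iff.2 hmem
      omega
  refine ⟨w, hadj.symm, r.reverse, fun v hv => ?_⟩
  rw [SimpleGraph.Walk.support_reverse, List.mem_reverse] at hv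
  have hvq : v ∈ q0.support := by
    rw [← List.mem_reverse, hsupp]; exact List.mem_cons_of_mem _ hv
  have := hsup v (SimpleGraph.Walk.support_takeUntil_subset p hc hvq)
  rcases this with h | h
  · exact h
  · exact absurd (Set.mem_singleton_iff.1 h ▸ hv) hnotc

section Specific

variable (α : ℕ) (C : Set {v : AV // AValid α v})

lemma compl_diff_singleton (c : {v : AV // AValid α v}) :
    ((C \ {c})ᶜ : Set _) = Cᶜ ∪ {c} := by
  ext v; simp [Set.mem_diff]; tauto

lemma top_mem_cut (hC : IsMinimalCut (Agraph α) {dTop α} (Dset α) C)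
    (h : dTop α ∈ C) : C = {dTop α} := by
  have huniq : ∀ y ∈ C, y = dTop α := by
    intro y hy
    by_contra hne
    refine hC.2 y hy ?_
    intro a b ha hb hr
    have ha' : a.1 = dTop α := ha
    have hmem : a.1 ∈ C \ {y} :=
      ⟨ha' ▸ h, fun hm => hne (by rw [← Set.mem_singleton_iff.1 hm, ha'])⟩
    exact a.2 hmem
  exact Set.eq_singleton_iff_unique_mem.2 ⟨h, huniq⟩

lemma cut_contra (hcut : IsCut (Agraph α) {dTop α} (Dset α) C)
    (htop : dTop α ∉ C) {b : {v : AV // AValid α v}} (hb : b ∈ Dset α) (hbC : b ∉ C)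
    (hr : ReachIn (Agraph α) Cᶜ (dTop α) b) : False :=
  hcut ⟨dTop α, htop⟩ ⟨b, hbC⟩ rfl hb (reachIn_to_induce hr htop hbC)

lemma not_cut_unpack (C' : Set {v : AV // AValid α v})
    (h : ¬ IsCut (Agraph α) {dTop α} (Dset α) C') :
    ∃ b, b ∈ Dset α ∧ b ∉ C' ∧ ReachIn (Agraph α) C'ᶜ (dTop α) b := by
  unfold IsCut at h
  push_neg at h
  obtain ⟨a, b, ha, hb, hr⟩ := h
  have ha' : a.1 = dTop α := ha
  exact ⟨b.1, hb, b.2, ha' ▸ induce_to_reachIn hr⟩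

lemma key_pred (hC : IsMinimalCut (Agraph α) {dTop α} (Dset α) C)
    (htop : dTop α ∉ C) {c : {v : AV // AValid α v}} (hc : c ∈ C)
    (hcd : c ≠ dTop α) :
    ∃ z, (Agraph α).Adj z c ∧ ReachIn (Agraph α) Cᶜ (dTop α) z := by
  classical
  obtain ⟨b, hbD, hbC', hr⟩ := not_cut_unpack α (C \ {c}) (hC.2 c hc)
  obtain ⟨p, hp⟩ := hr
  have hp' : ∀ v ∈ p.support, v ∈ Cᶜ ∪ {c} := fun v hv =>
    (compl_diff_singleton α C c) ▸ hp v hv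
  by_cases hmem : c ∈ p.support
  · exact exists_pred_of_walk p hmem hcd hp'
  · have hall : ∀ v ∈ p.support, v ∈ (Cᶜ : Set _) := fun v hv =>
      (hp' v hv).resolve_right fun h =>
        hmem ((Set.mem_singleton_iff.1 h) ▸ hv)
    have hbC : b ∉ C := by
      intro hbc
      have hbceq : b = c := by
        by_contra hne
        exact hbC' ⟨hbc, fun hm => hne (Set.mem_singleton_iff.1 hm)⟩
      exact hmem (hbceq ▸ p.end_mem_support)
    exact (cut_contra α C hC.1 htop hbD hbC ⟨p, hall⟩).elim

lemma key_succ (hC : IsMinimalCut (Agraph α) {dTop α} (Dset α) C)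
    (htop : dTop α ∉ C) {c : {v : AV // AValid α v}} (hc : c ∈ C)
    (hnotd : ∀ S, c.1 ≠ AV.d S) :
    ∃ z b, (Agraph α).Adj c z ∧ b ∈ Dset α ∧ b ∉ C ∧
      ReachIn (Agraph α) Cᶜ z b := by
  classical
  obtain ⟨b, hbD, hbC', hr⟩ := not_cut_unpack α (C \ {c}) (hC.2 c hc)
  have hcb : c ≠ b := fun h => by
    obtain ⟨S, hS⟩ := hbD
    exact hnotd S (h ▸ hS)
  have hbC : b ∉ C := fun h => hbC' ⟨h, fun hm => hcb (Set.mem_singleton_iff.1 hm).symm⟩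
  obtain ⟨p, hp⟩ := hr
  have hp' : ∀ v ∈ p.reverse.support, v ∈ Cᶜ ∪ {c} := fun v hv =>
    (compl_diff_singleton α C c) ▸ hp v
      (by rwa [SimpleGraph.Walk.support_reverse, List.mem_reverse] at hv)
  by_cases hmem : c ∈ p.reverse.support
  · obtain ⟨z, hadj, hrz⟩ := exists_pred_of_walk p.reverse hmem hcb hp'
    exact ⟨z, b, hadj.symm, hbD, hbC, hrz.reverse⟩
  · have hall : ∀ v ∈ p.reverse.support, v ∈ (Cᶜ : Set _) := fun v hv =>
      (hp' v hv).resolve_right fun h =>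
        hmem ((Set.mem_singleton_iff.1 h) ▸ hv)
    exact (cut_contra α C hC.1 htop hbD hbC
      ⟨p, fun v hv => hall v
        (by rw [SimpleGraph.Walk.support_reverse, List.mem_reverse]; exact hv)⟩).elim

end Specific


/-- Let `C` be a minimal `d_α`-`D_α` cut in `A_α` with `C ≠ {d_α}`.  For every
nonempty `S ⊆ {1, …, α-1}`: `d_S ∉ C` if and only if `x_{T ∪ {α}} ∈ C` for every
nonempty `T ⊆ {1, …, α-1}` with `T ∩ S ≠ ∅`. -/
theorem cut_d_iff (α : ℕ) (hα : 2 ≤ α) (C : Set {v : AV // AValid α v})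
    (hC : IsMinimalCut (Agraph α) {dTop α} (Dset α) C) (hCne : C ≠ {dTop α})
    (S : Finset ℕ) (hSne : S.Nonempty) (hS : S ⊆ Finset.Icc 1 (α - 1)) :
    (⟨AV.d S, hSne, hS⟩ : {v : AV // AValid α v}) ∉ C ↔
      ∀ (T : Finset ℕ) (hTne : T.Nonempty) (hT : T ⊆ Finset.Icc 1 (α - 1)),
        (T ∩ S).Nonempty →
        (⟨AV.x (T ∪ {α}), aValid_x_union α hα T hT hTne⟩ :
          {v : AV // AValid α v}) ∈ C := by
  classical
  have htopC : dTop α ∉ C := fun h => hCne (top_mem_cut α C hC h)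
  have hαS : α ∉ S := fun h => by
    have := (Finset.mem_Icc.1 (hS h)).2; omega
  constructor
  · intro hdS T hTne hT hTS
    by_contra hxT
    have e1 : (Agraph α).Adj (dTop α)
        ⟨AV.x (T ∪ {α}), aValid_x_union α hα T hT hTne⟩ :=
      Or.inl (show α ∈ T ∪ {α} by simp)
    have e2 : (Agraph α).Adj ⟨AV.x (T ∪ {α}), aValid_x_union α hα T hT hTne⟩
        (⟨AV.d S, hSne, hS⟩ : {v : AV // AValid α v}) := by
      refine Or.inr (show (S ∩ (T ∪ {α})).Nonempty from ?_)
      obtain ⟨e, he⟩ := hTS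
      rw [Finset.mem_inter] at he
      exact ⟨e, Finset.mem_inter.2 ⟨he.2, Finset.mem_union_left _ he.1⟩⟩
    exact cut_contra α C hC.1 htopC ⟨S, rfl⟩ hdS
      ((ReachIn.single e1 htopC hxT).trans (ReachIn.single e2 hxT hdS))
  · intro H hdSC
    have hdne : (⟨AV.d S, hSne, hS⟩ : {v : AV // AValid α v}) ≠ dTop α :=
      fun h => AV.noConfusion (congrArg Subtype.val h)
    obtain ⟨z1, hadj1, hr1⟩ := key_pred α C hC htopC hdSC hdne
    rcases z1 with ⟨zv, hzval⟩
    have hadj1' : AAdj α zv (AV.d S) ∨ AAdj α (AV.d S) zv := hadj1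
    rcases zv with _ | S₃ | U
    · simp [AAdj] at hadj1'
    · simp [AAdj] at hadj1'
    have hSU : (S ∩ U).Nonempty := by simpa [AAdj] using hadj1'
    obtain ⟨hUcard, hUsub⟩ := hzval
    have hxUC : (⟨AV.x U, ⟨hUcard, hUsub⟩⟩ : {v : AV // AValid α v}) ∉ C :=
      hr1.mem_right
    by_cases hαU : α ∈ U
    · -- contradiction with H applied to U.erase α
      have hTsub : U.erase α ⊆ Finset.Icc 1 (α - 1) := by
        intro e he
        rw [Finset.mem_erase] at he
        have := Finset.mem_Icc.1 (hUsub he.2)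
        rw [Finset.mem_Icc]
        omega
      have hTne : (U.erase α).Nonempty := by
        rw [← Finset.card_pos, Finset.card_erase_of_mem hαU]
        omega
      have hTS : ((U.erase α) ∩ S).Nonempty := by
        obtain ⟨e, he⟩ := hSU
        rw [Finset.mem_inter] at he
        refine ⟨e, Finset.mem_inter.2 ⟨Finset.mem_erase.2 ⟨?_, he.2⟩, he.1⟩⟩
        exact fun h => hαS (h ▸ he.1)
      have hmem := H (U.erase α) hTne hTsub hTS
      have hUeq : U.erase α ∪ {α} = U := by
        rw [Finset.union_comm, ← Finset.insert_eq, Finset.insert_erase hαU]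
      have hveq : (⟨AV.x (U.erase α ∪ {α}),
          aValid_x_union α hα _ hTsub hTne⟩ : {v : AV // AValid α v}) =
          ⟨AV.x U, ⟨hUcard, hUsub⟩⟩ := Subtype.ext (congrArg AV.x hUeq)
      rw [hveq] at hmem
      exact hxUC hmem
    · -- α ∉ U
      have hUsub' : U ⊆ Finset.Icc 1 (α - 1) := by
        intro e he
        have h1 := Finset.mem_Icc.1 (hUsub he)
        have h2 : e ≠ α := fun h => hαU (h ▸ he)
        rw [Finset.mem_Icc]
        omega
      have hUne : U.Nonempty := Finset.card_pos.1 (by omega)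
      have hUS : (U ∩ S).Nonempty := by rwa [Finset.inter_comm] at hSU
      have hcU := H U hUne hUsub' hUS
      obtain ⟨z2, b2, hadj2, hb2D, hb2C, hr2⟩ := key_succ α C hC htopC hcU
        (fun S' h => AV.noConfusion h)
      rcases z2 with ⟨z2v, hz2val⟩
      have hadj2' : AAdj α (AV.x (U ∪ {α})) z2v ∨ AAdj α z2v (AV.x (U ∪ {α})) :=
        hadj2
      have hz2C : (⟨z2v, hz2val⟩ : {v : AV // AValid α v}) ∉ C := hr2.mem_left
      rcases z2v with _ | S₃ | V
      · -- z2 = dTop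
        have heq : (⟨AV.top, hz2val⟩ : {v : AV // AValid α v}) = dTop α :=
          Subtype.ext rfl
        rw [heq] at hr2
        exact cut_contra α C hC.1 htopC hb2D hb2C hr2
      · -- z2 = d S₃
        have hS₃W : (S₃ ∩ (U ∪ {α})).Nonempty := by simpa [AAdj] using hadj2'
        obtain ⟨hS₃ne, hS₃sub⟩ := hz2val
        have hαS₃ : α ∉ S₃ := fun h => by
          have := (Finset.mem_Icc.1 (hS₃sub h)).2; omega
        have hS₃U : (S₃ ∩ U).Nonempty := by
          obtain ⟨e, he⟩ := hS₃W
          rw [Finset.mem_inter, Finset.mem_union, Finset.mem_singleton] at he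
          rcases he.2 with h | h
          · exact ⟨e, Finset.mem_inter.2 ⟨he.1, h⟩⟩
          · exact absurd (h ▸ he.1) hαS₃
        have eadj : (Agraph α).Adj ⟨AV.x U, ⟨hUcard, hUsub⟩⟩
            (⟨AV.d S₃, hS₃ne, hS₃sub⟩ : {v : AV // AValid α v}) :=
          Or.inr (show (S₃ ∩ U).Nonempty from hS₃U)
        exact cut_contra α C hC.1 htopC ⟨S₃, rfl⟩ hz2C
          (hr1.trans (ReachIn.single eadj hxUC hz2C))
      · -- z2 = x V
        have hVW : (V ∩ (U ∪ {α})).Nonempty := by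
          rcases hadj2' with h | h
          · simp only [AAdj] at h
            obtain ⟨e, he⟩ := h.2
            rw [Finset.mem_inter] at he
            exact ⟨e, Finset.mem_inter.2 ⟨he.2, he.1⟩⟩
          · simp only [AAdj] at h
            exact h.2
        have hVneW : V ≠ U ∪ {α} := by
          rcases hadj2' with h | h
          · simp only [AAdj] at h; exact fun he => h.1 he.symm
          · simp only [AAdj] at h; exact h.1
        by_cases hαV : α ∈ V
        · have etop : (Agraph α).Adj (dTop α)
              (⟨AV.x V, hz2val⟩ : {v : AV // AValid α v}) :=
            Or.inl (show α ∈ V from hαV)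
          exact cut_contra α C hC.1 htopC hb2D hb2C
            (ReachIn.cons etop htopC hr2)
        · have hVU : (V ∩ U).Nonempty := by
            obtain ⟨e, he⟩ := hVW
            rw [Finset.mem_inter, Finset.mem_union, Finset.mem_singleton] at he
            rcases he.2 with h | h
            · exact ⟨e, Finset.mem_inter.2 ⟨he.1, h⟩⟩
            · exact absurd (h ▸ he.1) hαV
          by_cases hVeq : V = U
          · subst hVeq
            have heq : (⟨AV.x V, hz2val⟩ : {v : AV // AValid α v}) =
                ⟨AV.x V, ⟨hUcard, hUsub⟩⟩ := rfl
            rw [heq] at hr2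
            exact cut_contra α C hC.1 htopC hb2D hb2C (hr1.trans hr2)
          · have exx : (Agraph α).Adj ⟨AV.x U, ⟨hUcard, hUsub⟩⟩
                (⟨AV.x V, hz2val⟩ : {v : AV // AValid α v}) :=
              Or.inl (show U ≠ V ∧ (U ∩ V).Nonempty from
                ⟨fun h => hVeq h.symm, by rwa [Finset.inter_comm] at hVU⟩)
            exact cut_contra α C hC.1 htopC hb2D hb2C
              (hr1.trans (ReachIn.cons exx hxUC hr2))
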